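/- For n ≥ 1 and 0 ≤ k ≤ n, define the counting function N_k : ℚ → ℕ by N_k(c) = #{(m₁, …, mₙ) ∈ ℤⁿ : ∑_{j=1}^{k} (m_j + ½)² + ∑_{j=k+1}^{n} m_j² = c}. Then: (a) for any subset J ⊆ {1, …, n} with |J| = k and any c ∈ ℚ, #{m ∈ ℤⁿ : ∑_{j∈J} (m_j + ½)² + ∑_{j∉J} m_j² = c} = N_k(c); and (b) if 0 ≤ k < k′ ≤ n, then there exists c ∈ ℚ with N_k(c) ≠ N_{k′}(c). In other words, the counting function depends only on |J| and determines |J|. -/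
import Mathlib

/-- The counting function `N_k(c) = #{m ∈ ℤⁿ : ∑_{j=1}^{k} (m_j + ½)² + ∑_{j=k+1}^{n} m_j² = c}`. -/
noncomputable def latticeShellCount (n k : ℕ) (c : ℚ) : ℕ :=
  Nat.card {m : Fin n → ℤ //
    (∑ j : Fin n, if (j : ℕ) < k then ((m j : ℚ) + 1 / 2) ^ 2 else ((m j : ℚ)) ^ 2) = c}

lemma card_lt_subtype (n k : ℕ) (hk : k ≤ n) :
    Fintype.card {x : Fin n // (x : ℕ) < k} = k := by
  have e : {x : Fin n // (x : ℕ) < k} ≃ Fin k :=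
    { toFun := fun x => ⟨x.1, x.2⟩
      invFun := fun y => ⟨⟨y.1, lt_of_lt_of_le y.2 hk⟩, y.2⟩
      left_inv := fun x => rfl
      right_inv := fun y => rfl }
  simp [Fintype.card_congr e]

lemma sum_lb (n k : ℕ) (hk : k ≤ n) :
    (∑ j : Fin n, if (j : ℕ) < k then (1/4 : ℚ) else 0) = k / 4 := by
  rw [Finset.sum_ite, Finset.sum_const, Finset.sum_const_zero, add_zero]
  have : (Finset.univ.filter fun j : Fin n => (j : ℕ) < k).card = k := by
    rw [← Fintype.card_subtype, card_lt_subtype n k hk]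
  rw [this]
  ring

/-- (a) For any `J ⊆ {1,…,n}` with `|J| = k` and any `c ∈ ℚ`, the number of
`m ∈ ℤⁿ` with `∑_{j∈J} (m_j + ½)² + ∑_{j∉J} m_j² = c` equals `N_k(c)`; and (b) if
`k < k′ ≤ n` then `N_k` and `N_{k′}` differ at some `c`: the counting function depends
only on `|J|` and determines `|J|`. -/
theorem latticeShellCount_eq_and_injective (n : ℕ) (hn : 1 ≤ n) (k : ℕ) (hk : k ≤ n) :
    (∀ J : Finset (Fin n), J.card = k → ∀ c : ℚ,
      Nat.card {m : Fin n → ℤ //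
          (∑ j : Fin n, if j ∈ J then ((m j : ℚ) + 1 / 2) ^ 2 else ((m j : ℚ)) ^ 2) = c}
        = latticeShellCount n k c) ∧
    (∀ k' : ℕ, k < k' → k' ≤ n → ∃ c : ℚ, latticeShellCount n k c ≠ latticeShellCount n k' c) := by
  constructor
  · -- part (a)
    intro J hJ c
    classical
    -- build a permutation σ with (σ j : ℕ) < k ↔ j ∈ J
    have h1 : Fintype.card {x : Fin n // x ∈ J} = Fintype.card {x : Fin n // (x : ℕ) < k} := by
      rw [card_lt_subtype n k hk]
      exact (Fintype.card_coe J).trans hJ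
    have h2 : Fintype.card {x : Fin n // ¬ x ∈ J} =
        Fintype.card {x : Fin n // ¬ (x : ℕ) < k} := by
      rw [Fintype.card_subtype_compl, Fintype.card_subtype_compl, h1]
    let eP := Fintype.equivOfCardEq h1
    let eN := Fintype.equivOfCardEq h2
    let σ : Equiv.Perm (Fin n) := Equiv.subtypeCongr eP eN
    have hσ : ∀ j : Fin n, ((σ j : ℕ) < k ↔ j ∈ J) := by
      intro j
      by_cases h : j ∈ J
      · have : σ j = (eP ⟨j, h⟩ : Fin n) := by simp [σ, Equiv.subtypeCongr, h]
        rw [this]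
        simp only [h, iff_true]
        exact (eP ⟨j, h⟩).2
      · have : σ j = (eN ⟨j, h⟩ : Fin n) := by simp [σ, Equiv.subtypeCongr, h]
        rw [this]
        simp only [h, iff_false]
        exact (eN ⟨j, h⟩).2
    unfold latticeShellCount
    apply Nat.card_congr
    refine Equiv.subtypeEquiv (Equiv.arrowCongr σ (Equiv.refl ℤ)) ?_
    intro m
    have key : (∑ j : Fin n,
        if ((j : ℕ) < k) then (((Equiv.arrowCongr σ (Equiv.refl ℤ)) m j : ℚ) + 1 / 2) ^ 2
        else (((Equiv.arrowCongr σ (Equiv.refl ℤ)) m j : ℚ)) ^ 2)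
        = ∑ j : Fin n, if j ∈ J then ((m j : ℚ) + 1 / 2) ^ 2 else ((m j : ℚ)) ^ 2 := by
      rw [← Equiv.sum_comp σ]
      refine Finset.sum_congr rfl fun i _ => ?_
      simp only [Equiv.arrowCongr_apply, Equiv.refl_apply, Function.comp_apply,
        Equiv.symm_apply_apply]
      simp [hσ i]
    rw [key]
  · -- part (b)
    intro k' hkk' hk'
    refine ⟨(k : ℚ) / 4, ?_⟩
    -- first: latticeShellCount n k' (k/4) = 0
    have hzero : latticeShellCount n k' ((k : ℚ) / 4) = 0 := by
      unfold latticeShellCount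
      rw [Nat.card_eq_zero]
      left
      constructor
      rintro ⟨m, hm⟩
      have hge : (∑ j : Fin n, if (j : ℕ) < k' then (1/4 : ℚ) else 0) ≤
          ∑ j : Fin n, if (j : ℕ) < k' then ((m j : ℚ) + 1 / 2) ^ 2 else ((m j : ℚ)) ^ 2 := by
        refine Finset.sum_le_sum fun j _ => ?_
        by_cases h : (j : ℕ) < k'
        · simp only [h, if_true]
          have ha : (2 * m j + 1 : ℤ) ≠ 0 := by omega
          have : (1 : ℤ) ≤ (2 * m j + 1) ^ 2 := by
            rcases (2 * m j + 1).lt_or_lt_of_ne ha with h' | h' <;> nlinarith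
          have : (1 : ℚ) ≤ ((2 * m j + 1 : ℤ) : ℚ) ^ 2 := by exact_mod_cast this
          push_cast at this
          nlinarith
        · simp only [h, if_false]
          positivity
      rw [sum_lb n k' hk', hm] at hge
      have : (k : ℚ) < k' := by exact_mod_cast hkk'
      linarith
    rw [hzero]
    -- second: latticeShellCount n k (k/4) ≠ 0
    unfold latticeShellCount
    -- the set consists exactly of m with m j ∈ {0,-1} for j < k and m j = 0 otherwise
    have hmem : ∀ m : Fin n → ℤ,
        (∑ j : Fin n, if (j : ℕ) < k then ((m j : ℚ) + 1 / 2) ^ 2 else ((m j : ℚ)) ^ 2)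
          = (k : ℚ) / 4 → ∀ j : Fin n, m j ∈ Set.Icc (-1 : ℤ) 0 := by
      intro m hm j
      have hle : ∀ i ∈ (Finset.univ : Finset (Fin n)), (if (i : ℕ) < k then (1/4 : ℚ) else 0) ≤
          (if (i : ℕ) < k then ((m i : ℚ) + 1 / 2) ^ 2 else ((m i : ℚ)) ^ 2) := by
        intro i _
        by_cases h : (i : ℕ) < k
        · simp only [h, if_true]
          have ha : (2 * m i + 1 : ℤ) ≠ 0 := by omega
          have h1 : (1 : ℤ) ≤ (2 * m i + 1) ^ 2 := by
            rcases (2 * m i + 1).lt_or_lt_of_ne ha with h' | h' <;> nlinarith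
          have h2 : (1 : ℚ) ≤ ((2 * m i + 1 : ℤ) : ℚ) ^ 2 := by exact_mod_cast h1
          push_cast at h2
          nlinarith
        · simp only [h, if_false]
          positivity
      have heq : ∀ i ∈ (Finset.univ : Finset (Fin n)), (if (i : ℕ) < k then (1/4 : ℚ) else 0)
          = (if (i : ℕ) < k then ((m i : ℚ) + 1 / 2) ^ 2 else ((m i : ℚ)) ^ 2) := by
        rw [← Finset.sum_eq_sum_iff_of_le hle]
        rw [sum_lb n k hk, hm]
      have hj := heq j (Finset.mem_univ j)
      by_cases h : (j : ℕ) < k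
      · simp only [h, if_true] at hj
        have : ((m j : ℚ)) * ((m j : ℚ) + 1) = 0 := by nlinarith
        have : ((m j * (m j + 1) : ℤ) : ℚ) = 0 := by push_cast; linarith [this]
        have := (mul_eq_zero.mp (by exact_mod_cast this : (m j * (m j + 1) : ℤ) = 0))
        rcases this with h' | h'
        · simp [h']
        · constructor <;> omega
      · simp only [h, if_false] at hj
        have : (m j : ℚ) = 0 := by nlinarith
        have : m j = 0 := by exact_mod_cast this
        simp [this]
    have hfin : Finite {m : Fin n → ℤ //
        (∑ j : Fin n, if (j : ℕ) < k then ((m j : ℚ) + 1 / 2) ^ 2 else ((m j : ℚ)) ^ 2)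
          = (k : ℚ) / 4} := by
      have : {m : Fin n → ℤ |
          (∑ j : Fin n, if (j : ℕ) < k then ((m j : ℚ) + 1 / 2) ^ 2 else ((m j : ℚ)) ^ 2)
            = (k : ℚ) / 4}.Finite := by
        refine Set.Finite.subset (Set.Finite.pi fun _ : Fin n => Set.finite_Icc (-1 : ℤ) 0) ?_
        intro m hm
        exact fun j _ => hmem m hm j
      exact this.to_subtype
    have hne : Nonempty {m : Fin n → ℤ //
        (∑ j : Fin n, if (j : ℕ) < k then ((m j : ℚ) + 1 / 2) ^ 2 else ((m j : ℚ)) ^ 2)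
          = (k : ℚ) / 4} := by
      refine ⟨⟨fun _ => 0, ?_⟩⟩
      have : (∑ j : Fin n, if (j : ℕ) < k then (((0 : ℤ) : ℚ) + 1 / 2) ^ 2
          else (((0 : ℤ) : ℚ)) ^ 2) = ∑ j : Fin n, if (j : ℕ) < k then (1/4 : ℚ) else 0 := by
        refine Finset.sum_congr rfl fun j _ => ?_
        by_cases h : (j : ℕ) < k <;> simp [h] <;> norm_num
      rw [this, sum_lb n k hk]
    exact Nat.card_ne_zero.mpr ⟨hne, hfin⟩
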